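/- There exist real coefficients a_0,...,a_9, b_0,...,b_9, A_0,...,A_9, B_0,...,B_9 such that the function f_1(r) = -∫_0^π [cos θ · F^+(r cos θ, r sin θ) + sin θ · G^+(r cos θ, r sin θ)] dθ - ∫_{-π}^0 [cos θ · F^-(r cos θ, r sin θ) + sin θ · G^-(r cos θ, r sin θ)] dθ has exactly three zeros in (0, ∞), and each such zero r* is simple, i.e. f_1'(r*) ≠ 0. -/

import Mathlib

open Real intervalIntegral

/-- The general cubic polynomial in two variables with coefficient tuple `c`. -/
noncomputable def cubicPoly (c : ℕ → ℝ) (x y : ℝ) : ℝ :=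
  c 0 + c 1 * x + c 2 * y + c 3 * x ^ 2 + c 4 * x * y + c 5 * y ^ 2
    + c 6 * x ^ 3 + c 7 * x ^ 2 * y + c 8 * x * y ^ 2 + c 9 * y ^ 3

/-- The first averaged function of the discontinuous piecewise cubic
perturbation of the linear center, with upper coefficients `a, b` and lower
coefficients `A, B`. -/
noncomputable def f1cubic (a b A B : ℕ → ℝ) (r : ℝ) : ℝ :=
  -(∫ θ in (0:ℝ)..π,
      Real.cos θ * cubicPoly a (r * Real.cos θ) (r * Real.sin θ)
        + Real.sin θ * cubicPoly b (r * Real.cos θ) (r * Real.sin θ))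
    - (∫ θ in (-π)..(0:ℝ),
      Real.cos θ * cubicPoly A (r * Real.cos θ) (r * Real.sin θ)
        + Real.sin θ * cubicPoly B (r * Real.cos θ) (r * Real.sin θ))

/-- upper `F` coefficients -/
noncomputable def myA : ℕ → ℝ := fun n =>
  if n = 1 then -22 / π else if n = 4 then 9 else if n = 6 then -8 / (3 * π) else 0

/-- upper `G` coefficients -/
noncomputable def myB : ℕ → ℝ := fun n => if n = 0 then 3 else 0

lemma f1_eq (r : ℝ) :
    f1cubic myA myB (fun _ => 0) (fun _ => 0) r = (r - 1) * (r - 2) * (r - 3) := by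
  have hπ : (π : ℝ) ≠ 0 := Real.pi_ne_zero
  -- the antiderivative of the upper integrand
  set c1 : ℝ := -(11 * r + r ^ 3) / π with hc1
  set c4 : ℝ := 2 * r ^ 3 / (3 * π) with hc4
  set H : ℝ → ℝ := fun θ =>
    c1 * θ + c1 * Real.sin θ * Real.cos θ - 3 * r ^ 2 * Real.cos θ ^ 3
      - c4 * (Real.sin θ * Real.cos θ ^ 3) - 3 * Real.cos θ with hH
  have key : ∀ θ ∈ Set.uIcc (0:ℝ) π, HasDerivAt H
      (Real.cos θ * cubicPoly myA (r * Real.cos θ) (r * Real.sin θ)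
        + Real.sin θ * cubicPoly myB (r * Real.cos θ) (r * Real.sin θ)) θ := by
    intro θ _
    have hs := Real.hasDerivAt_sin θ
    have hc := Real.hasDerivAt_cos θ
    have h1 : HasDerivAt (fun x : ℝ => c1 * x) c1 θ := by
      simpa using (hasDerivAt_id θ).const_mul c1
    have h2 : HasDerivAt (fun x => c1 * Real.sin x * Real.cos x)
        (c1 * Real.cos θ * Real.cos θ + c1 * Real.sin θ * -Real.sin θ) θ :=
      (hs.const_mul c1).mul hc
    have h3 : HasDerivAt (fun x => Real.cos x ^ 3)
        (3 * Real.cos θ ^ 2 * -Real.sin θ) θ := by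
      simpa using hc.fun_pow 3
    have h3' : HasDerivAt (fun x => 3 * r ^ 2 * Real.cos x ^ 3)
        (3 * r ^ 2 * (3 * Real.cos θ ^ 2 * -Real.sin θ)) θ := h3.const_mul _
    have h4 : HasDerivAt (fun x => c4 * (Real.sin x * Real.cos x ^ 3))
        (c4 * (Real.cos θ * Real.cos θ ^ 3
          + Real.sin θ * (3 * Real.cos θ ^ 2 * -Real.sin θ))) θ :=
      (hs.mul h3).const_mul c4
    have h5 : HasDerivAt (fun x => 3 * Real.cos x) (3 * -Real.sin θ) θ :=
      hc.const_mul 3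
    have hD := (((h1.add h2).sub h3').sub h4).sub h5
    have hpy := Real.sin_sq_add_cos_sq θ
    refine hD.congr_deriv (Eq.symm ?_)
    simp only [cubicPoly, myA, myB]
    norm_num
    rw [hc1, hc4]
    field_simp
    linear_combination (-(11 * r + r ^ 3) * π + 2 * r ^ 3 * π * Real.cos θ ^ 2 + π * (-22 * r - 2 * r ^ 3 - 8 * r ^ 3 * Real.cos θ ^ 2) + (π - 1) * (33 * r + 3 * r ^ 3 + 6 * r ^ 3 * Real.cos θ ^ 2)) * hpy
  have hint : IntervalIntegrable
      (fun θ => Real.cos θ * cubicPoly myA (r * Real.cos θ) (r * Real.sin θ)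
        + Real.sin θ * cubicPoly myB (r * Real.cos θ) (r * Real.sin θ))
      MeasureTheory.volume 0 π := by
    apply Continuous.intervalIntegrable
    unfold cubicPoly
    fun_prop
  have hI := intervalIntegral.integral_eq_sub_of_hasDerivAt key hint
  have hI2 : (∫ θ in (-π)..(0:ℝ),
      Real.cos θ * cubicPoly (fun _ => (0:ℝ)) (r * Real.cos θ) (r * Real.sin θ)
        + Real.sin θ * cubicPoly (fun _ => (0:ℝ)) (r * Real.cos θ) (r * Real.sin θ)) = 0 := by
    simp [cubicPoly]
  rw [f1cubic, hI, hI2, hH]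
  simp only [Real.sin_pi, Real.cos_pi, Real.sin_zero, Real.cos_zero]
  rw [hc1, hc4]
  field_simp
  ring

theorem exists_f1_with_three_simple_positive_zeros :
    ∃ a b A B : ℕ → ℝ,
      (∃ S : Finset ℝ, S.card = 3 ∧
        (∀ x : ℝ, x ∈ S ↔ (0 < x ∧ f1cubic a b A B x = 0))) ∧
      (∀ x : ℝ, 0 < x → f1cubic a b A B x = 0 → deriv (f1cubic a b A B) x ≠ 0) := by
  refine ⟨myA, myB, (fun _ => 0), (fun _ => 0), ?_, ?_⟩
  · refine ⟨{1, 2, 3}, by norm_num, ?_⟩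
    intro x
    rw [f1_eq]
    constructor
    · intro hx
      simp only [Finset.mem_insert, Finset.mem_singleton] at hx
      rcases hx with h | h | h <;> subst h <;> norm_num
    · rintro ⟨hx, hf⟩
      simp only [Finset.mem_insert, Finset.mem_singleton]
      rcases mul_eq_zero.1 hf with h | h
      · rcases mul_eq_zero.1 h with h | h
        · left; linarith [sub_eq_zero.1 h]
        · right; left; linarith [sub_eq_zero.1 h]
      · right; right; linarith [sub_eq_zero.1 h]
  · intro x hx hf
    have hfun : f1cubic myA myB (fun _ => 0) (fun _ => 0)
        = fun r => (r - 1) * (r - 2) * (r - 3) := funext f1_eq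
    rw [hfun] at hf ⊢
    have hd : HasDerivAt (fun r : ℝ => (r - 1) * (r - 2) * (r - 3))
        ((1 * (x - 2) + (x - 1) * 1) * (x - 3) + (x - 1) * (x - 2) * 1) x := by
      exact (((hasDerivAt_id x).sub_const 1).mul ((hasDerivAt_id x).sub_const 2)).mul
        ((hasDerivAt_id x).sub_const 3)
    rw [hd.deriv]
    have hx3 : x = 1 ∨ x = 2 ∨ x = 3 := by
      rcases mul_eq_zero.1 hf with h | h
      · rcases mul_eq_zero.1 h with h | h
        · left; linarith [sub_eq_zero.1 h]
        · right; left; linarith [sub_eq_zero.1 h]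
      · right; right; linarith [sub_eq_zero.1 h]
    rcases hx3 with h | h | h <;> subst h <;> norm_num
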